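/- arXiv:1903.02813 — 2 statements merged into one kernel-verified Lean document; each statement's English description precedes it below -/
import Mathlib

section
/- Let p be a real pyramid, J = [a,b) a real interval, and D(p) the set of discontinuity points of p. Then p ≥ 1 on J and p − 1_J is a real pyramid if and only if exactly one of the following holds: (1) 0 < a, a ∉ D(p) and b ∈ D(p); (2) a ≤ 0 < b, a ∈ D(p) and b ∈ D(p); (3) b ≤ 0, a ∈ D(p) and b ∉ D(p). -/
noncomputable section
open Function
open Topology Filter
open scoped Classical

/-- The `ℕ`-valued indicator function of the interval `[a, b)`. -/
def ind (a b : ℝ) : ℝ → ℕ := (Set.Ico a b).indicator fun _ => 1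

/-- A real pyramid: a function `p : ℝ → ℕ` vanishing outside a bounded set, maximal at `0`,
nondecreasing on `(-∞, 0]`, nonincreasing on `[0, ∞)`, right-continuous and piecewise
constant with finitely many discontinuities, and with jumps of size at most 1
(`p₋(x)` is the left limit of `p` at `x`). -/
def IsRealPyramid (p : ℝ → ℕ) : Prop :=
  (∃ M : ℝ, ∀ x : ℝ, M ≤ |x| → p x = 0) ∧
  (∀ x, p x ≤ p 0) ∧
  (∀ ⦃x y : ℝ⦄, x ≤ y → y ≤ 0 → p x ≤ p y) ∧
  (∀ ⦃x y : ℝ⦄, 0 ≤ x → x ≤ y → p y ≤ p x) ∧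
  (∀ x, ContinuousWithinAt p (Set.Ici x) x) ∧
  {x : ℝ | ¬ ContinuousAt p x}.Finite ∧
  (∀ x, |(p x : ℤ) - ((Function.leftLim p x : ℕ) : ℤ)| ≤ 1)

/-- The interval `[a, b)` is addable for `p` if `p + 1_{[a,b)}` is again a real pyramid. -/
def Addable (p : ℝ → ℕ) (a b : ℝ) : Prop := IsRealPyramid (fun x => p x + ind a b x)

/-- The interval `[a, b)` is removable for `p` if `p ≥ 1` on `[a, b)` and `p − 1_{[a,b)}`
is again a real pyramid. -/
def Removable (p : ℝ → ℕ) (a b : ℝ) : Prop :=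
  (∀ x ∈ Set.Ico a b, 1 ≤ p x) ∧ IsRealPyramid (fun x => p x - ind a b x)

/-- `n_J(p)`: `1` if `J = [a,b)` is addable for `p`, `−1` if removable, `0` otherwise. -/
def nJ (p : ℝ → ℕ) (a b : ℝ) : ℤ :=
  if Addable p a b then 1 else if Removable p a b then -1 else 0

lemma contAt_iff_nat {q : ℝ → ℕ} {x : ℝ} :
    ContinuousAt q x ↔ ∀ᶠ y in 𝓝 x, q y = q x := by
  constructor
  · intro h
    have := h ((isOpen_discrete {q x}).mem_nhds rfl)
    filter_upwards [this] with y hy using hy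
  · intro h
    exact Filter.Tendsto.congr' (by filter_upwards [h] with y hy using hy.symm) tendsto_const_nhds

lemma contWithinAt_iff_nat {q : ℝ → ℕ} {s : Set ℝ} {x : ℝ} :
    ContinuousWithinAt q s x ↔ ∀ᶠ y in 𝓝[s] x, q y = q x := by
  constructor
  · intro h
    have := h ((isOpen_discrete {q x}).mem_nhds rfl)
    filter_upwards [this] with y hy using hy
  · intro h
    exact Filter.Tendsto.congr' (by filter_upwards [h] with y hy using hy.symm) tendsto_const_nhds

lemma leftLim_eq_of_eventuallyEq {f : ℝ → ℕ} {x : ℝ} {c : ℕ}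
    (h : ∀ᶠ y in 𝓝[<] x, f y = c) : Function.leftLim f x = c := by
  refine leftLim_eq_of_tendsto ?_
  exact Filter.Tendsto.congr' (by filter_upwards [h] with y hy using hy.symm) tendsto_const_nhds

lemma pyr_left_eventually {p : ℝ → ℕ}
    (hmax : ∀ x, p x ≤ p 0)
    (hmono : ∀ ⦃x y : ℝ⦄, x ≤ y → y ≤ 0 → p x ≤ p y)
    (hanti : ∀ ⦃x y : ℝ⦄, 0 ≤ x → x ≤ y → p y ≤ p x) (x : ℝ) :
    ∀ᶠ y in 𝓝[<] x, p y = Function.leftLim p x := by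
  suffices h : ∃ c, ∀ᶠ y in 𝓝[<] x, p y = c by
    obtain ⟨c, hc⟩ := h
    rwa [leftLim_eq_of_eventuallyEq hc]
  rcases le_or_gt x 0 with hx | hx
  · set A : Set ℕ := p '' Set.Ioo (x - 1) x with hA
    have hAne : A.Nonempty := ⟨p (x - 1/2), ⟨x - 1/2, ⟨by linarith, by linarith⟩, rfl⟩⟩
    have hbdd : BddAbove A := ⟨p 0, by rintro n ⟨y, hy, rfl⟩; exact hmax y⟩
    obtain ⟨y₀, hy₀, hval⟩ := Nat.sSup_mem hAne hbdd
    refine ⟨sSup A, Filter.eventually_of_mem (Ioo_mem_nhdsLT hy₀.2) ?_⟩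
    intro y hy
    have h1 : p y₀ ≤ p y := hmono hy.1.le (hy.2.le.trans hx)
    have h2 : p y ≤ sSup A := le_csSup hbdd ⟨y, ⟨hy₀.1.trans hy.1, hy.2⟩, rfl⟩
    omega
  · set l : ℝ := max (x - 1) 0 with hl
    have hlx : l < x := by rw [hl]; apply max_lt <;> linarith
    set A : Set ℕ := p '' Set.Ioo l x with hA
    have hAne : A.Nonempty := ⟨p ((l + x)/2), ⟨(l + x)/2, ⟨by linarith, by linarith⟩, rfl⟩⟩
    obtain ⟨y₀, hy₀, hval⟩ := Nat.sInf_mem hAne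
    refine ⟨sInf A, Filter.eventually_of_mem (Ioo_mem_nhdsLT hy₀.2) ?_⟩
    intro y hy
    have hy₀0 : (0:ℝ) ≤ y₀ := le_trans (le_max_right _ _) hy₀.1.le
    have h1 : p y ≤ p y₀ := hanti hy₀0 hy.1.le
    have h2 : sInf A ≤ p y := Nat.sInf_le ⟨y, ⟨hy₀.1.trans hy.1, hy.2⟩, rfl⟩
    omega

lemma pyr_cont_iff {p : ℝ → ℕ} {x : ℝ} (hrc : ContinuousWithinAt p (Set.Ici x) x)
    (hev : ∀ᶠ y in 𝓝[<] x, p y = Function.leftLim p x) :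
    ContinuousAt p x ↔ Function.leftLim p x = p x := by
  constructor
  · intro h
    have h2 : ∀ᶠ y in 𝓝[<] x, p y = p x := nhdsWithin_le_nhds (contAt_iff_nat.1 h)
    obtain ⟨y, hy1, hy2⟩ := (hev.and h2).exists
    rw [← hy1, hy2]
  · intro h
    rw [contAt_iff_nat, ← nhdsLT_sup_nhdsGE x, Filter.eventually_sup]
    exact ⟨hev.mono fun y hy => hy.trans h, contWithinAt_iff_nat.1 hrc⟩

lemma ind_apply (a b x : ℝ) : ind a b x = if a ≤ x ∧ x < b then 1 else 0 := by
  simp [ind, Set.indicator_apply, Set.mem_Ico]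

/-- `p ≥ 1` on `[a,b)` and `p − 1_{[a,b)}` is a real pyramid iff exactly one
of the three listed (mutually exclusive) conditions on the endpoints and the discontinuity
set `D(p) = {x | p is discontinuous at x}` holds. -/
theorem removable_iff (p : ℝ → ℕ) (hp : IsRealPyramid p) (a b : ℝ) (hab : a < b) :
    ((∀ x ∈ Set.Ico a b, 1 ≤ p x) ∧ IsRealPyramid (fun x => p x - ind a b x)) ↔
      ((0 < a ∧ ContinuousAt p a ∧ ¬ ContinuousAt p b) ∨
       (a ≤ 0 ∧ 0 < b ∧ ¬ ContinuousAt p a ∧ ¬ ContinuousAt p b) ∨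
       (b ≤ 0 ∧ ¬ ContinuousAt p a ∧ ContinuousAt p b)) := by
  obtain ⟨⟨M, hM⟩, hmax, hmono, hanti, hrc, hfin, hjump⟩ := hp
  set L : ℝ → ℕ := Function.leftLim p with hLdef
  have hev : ∀ x : ℝ, ∀ᶠ y in 𝓝[<] x, p y = L x :=
    fun x => pyr_left_eventually hmax hmono hanti x
  have hcont : ∀ x : ℝ, ContinuousAt p x ↔ L x = p x := fun x => pyr_cont_iff (hrc x) (hev x)
  have hjle : ∀ x : ℝ, p x ≤ L x + 1 ∧ L x ≤ p x + 1 := by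
    intro x
    have := hjump x
    rw [abs_le] at this
    constructor <;> omega
  have hLle : ∀ x : ℝ, x ≤ 0 → L x ≤ p x := by
    intro x hx
    obtain ⟨y, hy1, hy2⟩ := ((hev x).and eventually_mem_nhdsWithin).exists
    rw [← hy1]
    exact hmono (le_of_lt hy2) hx
  have hleL : ∀ x y : ℝ, x ≤ 0 → y < x → p y ≤ L x := by
    intro x y hx hyx
    obtain ⟨z, hz1, hz2⟩ := ((hev x).and
      (Filter.eventually_of_mem (Ioo_mem_nhdsLT hyx) fun z hz => hz)).exists
    rw [← hz1]
    exact hmono hz2.1.le (hz2.2.le.trans hx)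
  have hLge : ∀ x : ℝ, 0 < x → p x ≤ L x := by
    intro x hx
    obtain ⟨z, hz1, hz2⟩ := ((hev x).and
      (Filter.eventually_of_mem (Ioo_mem_nhdsLT hx) fun z hz => hz)).exists
    rw [← hz1]
    exact hanti hz2.1.le hz2.2.le
  have hgeL : ∀ x y : ℝ, 0 ≤ y → y < x → L x ≤ p y := by
    intro x y hy0 hyx
    obtain ⟨z, hz1, hz2⟩ := ((hev x).and
      (Filter.eventually_of_mem (Ioo_mem_nhdsLT hyx) fun z hz => hz)).exists
    rw [← hz1]
    exact hanti hy0 hz2.1.le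
  have hdisc_le : ∀ x : ℝ, x ≤ 0 → (¬ ContinuousAt p x ↔ p x = L x + 1) := by
    intro x hx
    have h1 := hLle x hx
    have h2 := (hjle x).1
    rw [hcont x]
    omega
  have hdisc_pos : ∀ x : ℝ, 0 < x → (¬ ContinuousAt p x ↔ L x = p x + 1) := by
    intro x hx
    have h1 := hLge x hx
    have h2 := (hjle x).2
    rw [hcont x]
    omega
  -- left limit of q
  have hqev : ∀ x : ℝ, ∀ᶠ y in 𝓝[<] x,
      p y - ind a b y = L x - (if a < x ∧ x ≤ b then 1 else 0) := by
    intro x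
    by_cases h : a < x ∧ x ≤ b
    · rw [if_pos h]
      filter_upwards [hev x,
        Filter.eventually_of_mem (Ioo_mem_nhdsLT h.1) (fun y hy => hy)] with y hy hy2
      rw [hy, ind_apply, if_pos ⟨hy2.1.le, lt_of_lt_of_le hy2.2 h.2⟩]
    · rw [if_neg h]
      rcases le_or_gt x a with hxa | hxa
      · filter_upwards [hev x, eventually_mem_nhdsWithin] with y hy hy2
        rw [hy, ind_apply, if_neg (by rintro ⟨h1, -⟩; exact absurd (h1.trans_lt hy2) (not_lt.2 hxa))]
      · have hbx : b < x := by
          by_contra hbx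
          exact h ⟨hxa, not_lt.1 hbx⟩
        filter_upwards [hev x,
          Filter.eventually_of_mem (Ioo_mem_nhdsLT hbx) (fun y hy => hy)] with y hy hy2
        rw [hy, ind_apply, if_neg (by rintro ⟨-, h2⟩; exact absurd (hy2.1.trans h2) (lt_irrefl b))]
  have hqL : ∀ x : ℝ, Function.leftLim (fun y => p y - ind a b y) x
      = L x - (if a < x ∧ x ≤ b then 1 else 0) :=
    fun x => leftLim_eq_of_eventuallyEq (hqev x)
  constructor
  · rintro ⟨h1, -, -, hqmono, hqanti, -, -, hqjump⟩
    have hL1 : ∀ x : ℝ, a < x → x ≤ b → 1 ≤ L x := by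
      intro x hax hxb
      obtain ⟨y, hy1, hy2⟩ := ((hev x).and
        (Filter.eventually_of_mem (Ioo_mem_nhdsLT hax) fun y hy => hy)).exists
      rw [← hy1]
      exact h1 y ⟨hy2.1.le, lt_of_lt_of_le hy2.2 hxb⟩
    have hinda : ind a b a = 1 := by rw [ind_apply, if_pos ⟨le_refl a, hab⟩]
    have hindb : ind a b b = 0 := by rw [ind_apply, if_neg (by rintro ⟨-, h2⟩; exact lt_irrefl b h2)]
    have hpa1 : 1 ≤ p a := h1 a ⟨le_refl a, hab⟩
    have key_a : a ≤ 0 → p a = L a + 1 := by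
      intro ha0
      obtain ⟨y, hy1, hy2⟩ := ((hev a).and eventually_mem_nhdsWithin).exists
      have hqy := hqmono (le_of_lt hy2) ha0
      simp only at hqy
      rw [hinda] at hqy
      rw [ind_apply, if_neg (by rintro ⟨h1', -⟩; exact absurd (h1'.trans_lt hy2) (not_lt.2 (le_refl a)))] at hqy
      have := (hjle a).1
      omega
    have key_b : 0 < b → L b = p b + 1 := by
      intro hb0
      have hmaxab : max a 0 < b := max_lt hab hb0
      obtain ⟨y, hy1, hy2⟩ := ((hev b).and
        (Filter.eventually_of_mem (Ioo_mem_nhdsLT hmaxab) fun y hy => hy)).exists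
      have hy0 : (0:ℝ) ≤ y := le_trans (le_max_right a 0) hy2.1.le
      have hya : a ≤ y := le_trans (le_max_left a 0) hy2.1.le
      have hqy := hqanti hy0 hy2.2.le
      simp only at hqy
      rw [hindb] at hqy
      rw [ind_apply, if_pos ⟨hya, hy2.2⟩] at hqy
      have hpy1 : 1 ≤ p y := h1 y ⟨hya, hy2.2⟩
      have := (hjle b).2
      omega
    have key_a' : 0 < a → L a = p a := by
      intro ha0
      have hj := hqjump a
      rw [hqL a, if_neg (by rintro ⟨h1', -⟩; exact lt_irrefl a h1')] at hj
      simp only at hj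
      rw [hinda, abs_le] at hj
      have h2 := hLge a ha0
      have h3 := (hjle a).2
      omega
    have key_b' : b ≤ 0 → L b = p b := by
      intro hb0
      have hj := hqjump b
      rw [hqL b, if_pos ⟨hab, le_refl b⟩] at hj
      simp only at hj
      rw [hindb, abs_le] at hj
      have h2 := hLle b hb0
      have h3 := hL1 b hab (le_refl b)
      omega
    rcases lt_or_ge 0 a with ha0 | ha0
    · exact Or.inl ⟨ha0, (hcont a).2 (key_a' ha0),
        (hdisc_pos b (ha0.trans hab)).2 (key_b (ha0.trans hab))⟩
    · rcases lt_or_ge 0 b with hb0 | hb0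
      · exact Or.inr (Or.inl ⟨ha0, hb0, (hdisc_le a ha0).2 (key_a ha0),
          (hdisc_pos b hb0).2 (key_b hb0)⟩)
      · exact Or.inr (Or.inr ⟨hb0, (hdisc_le a (hab.le.trans hb0)).2 (key_a (hab.le.trans hb0)),
          (hcont b).2 (key_b' hb0)⟩)
  · intro hcase
    have main : (a ≤ 0 → p a = L a + 1) → (0 < a → L a = p a) →
        (0 < b → L b = p b + 1) → (b ≤ 0 → L b = p b) →
        ((∀ x ∈ Set.Ico a b, 1 ≤ p x) ∧ IsRealPyramid (fun x => p x - ind a b x)) := by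
      intro hA hA' hB hB'
      have h1 : ∀ x ∈ Set.Ico a b, 1 ≤ p x := by
        rintro x ⟨hax, hxb⟩
        rcases le_or_gt x 0 with hx0 | hx0
        · have ha0 : a ≤ 0 := hax.trans hx0
          have := hA ha0
          have := hmono hax hx0
          omega
        · have hb0 : 0 < b := hx0.trans hxb
          have := hB hb0
          have := hgeL b x hx0.le hxb
          omega
      have hL1 : ∀ x : ℝ, a < x → x ≤ b → 1 ≤ L x := by
        intro x hax hxb
        obtain ⟨y, hy1, hy2⟩ := ((hev x).and
          (Filter.eventually_of_mem (Ioo_mem_nhdsLT hax) fun y hy => hy)).exists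
        rw [← hy1]
        exact h1 y ⟨hy2.1.le, lt_of_lt_of_le hy2.2 hxb⟩
      have hLb0 : 0 < b → L b ≤ p 0 := fun hb0 => hgeL b 0 (le_refl 0) hb0
      refine ⟨h1, ⟨M, fun x hx => by simp [hM x hx]⟩, ?_, ?_, ?_, ?_, ?_, ?_⟩
      · -- max at 0
        intro x
        simp only [ind_apply]
        split_ifs with hx h0 h0
        · have := hmax x
          have := h1 x hx
          omega
        · have := hmax x
          omega
        · -- x ∉ J, 0 ∈ J
          rcases le_or_gt a x with hax | hax
          · have hbx : b ≤ x := by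
              by_contra hbx
              exact hx ⟨hax, not_le.1 hbx⟩
            have hb0 : 0 < b := h0.2
            have := hB hb0
            have := hanti hb0.le hbx
            have := hLb0 hb0
            omega
          · have ha0 : a ≤ 0 := h0.1
            have := hA ha0
            have := hleL a x ha0 hax
            have := hmax a
            omega
        · exact hmax x
      · -- monotone on (-∞, 0]
        intro x y hxy hy0
        simp only [ind_apply]
        split_ifs with hx hy hy
        · have := hmono hxy hy0
          have := h1 x hx
          omega
        · have hby : b ≤ y := by
            by_contra hby
            exact hy ⟨hx.1.trans hxy, not_le.1 hby⟩
          have := hmono hxy hy0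
          omega
        · have hxa : x < a := by
            by_contra hxa
            exact hx ⟨not_lt.1 hxa, lt_of_le_of_lt hxy hy.2⟩
          have ha0 : a ≤ 0 := hy.1.trans hy0
          have := hA ha0
          have := hleL a x ha0 hxa
          have := hmono hy.1 hy0
          omega
        · exact hmono hxy hy0
      · -- antitone on [0, ∞)
        intro x y hx0 hxy
        simp only [ind_apply]
        split_ifs with hy hx hx
        · have := hanti hx0 hxy
          omega
        · have := hanti hx0 hxy
          omega
        · have hby : b ≤ y := by
            by_contra hby
            exact hy ⟨hx.1.trans hxy, not_le.1 hby⟩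
          have hb0 : 0 < b := lt_of_le_of_lt hx0 hx.2
          have := hB hb0
          have := hanti hb0.le hby
          have := hgeL b x hx0 hx.2
          omega
        · exact hanti hx0 hxy
      · -- right continuity
        intro x
        rw [contWithinAt_iff_nat]
        have hp' : ∀ᶠ y in 𝓝[≥] x, p y = p x := contWithinAt_iff_nat.1 (hrc x)
        have hi : ∀ᶠ y in 𝓝[≥] x, ind a b y = ind a b x := by
          rcases lt_or_ge x a with h | h
          · filter_upwards [Filter.eventually_of_mem (Ico_mem_nhdsGE h) fun y hy => hy]
              with y hy
            rw [ind_apply, ind_apply, if_neg (by rintro ⟨h1', -⟩; exact absurd hy.2 (not_lt.2 h1')),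
              if_neg (by rintro ⟨h1', -⟩; exact absurd h (not_lt.2 h1'))]
          · rcases lt_or_ge x b with h2 | h2
            · filter_upwards [Filter.eventually_of_mem (Ico_mem_nhdsGE h2) fun y hy => hy]
                with y hy
              rw [ind_apply, ind_apply, if_pos ⟨h.trans hy.1, hy.2⟩, if_pos ⟨h, h2⟩]
            · filter_upwards [eventually_mem_nhdsWithin] with y hy
              rw [ind_apply, ind_apply,
                if_neg (by rintro ⟨-, h2'⟩; exact absurd (h2.trans hy) (not_le.2 h2')),
                if_neg (by rintro ⟨-, h2'⟩; exact absurd h2 (not_le.2 h2'))]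
        filter_upwards [hp', hi] with y h h'
        simp only [h, h']
      · -- finitely many discontinuities
        apply Set.Finite.subset (hfin.union (Set.toFinite {a, b}))
        intro x hx
        simp only [Set.mem_setOf_eq] at hx
        rw [Set.mem_union]
        by_contra hx'
        push_neg at hx'
        obtain ⟨hxp, hxab⟩ := hx'
        simp only [Set.mem_setOf_eq, not_not] at hxp
        have hxa : x ≠ a := fun h => hxab (by simp [h])
        have hxb : x ≠ b := fun h => hxab (by simp [h])
        apply hx
        rw [contAt_iff_nat]
        have hp' : ∀ᶠ y in 𝓝 x, p y = p x := contAt_iff_nat.1 hxp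
        have hi : ∀ᶠ y in 𝓝 x, ind a b y = ind a b x := by
          rcases lt_trichotomy x a with h | h | h
          · filter_upwards [(isOpen_Iio (a := a)).eventually_mem h] with y hy
            rw [ind_apply, ind_apply,
              if_neg (by rintro ⟨h1', -⟩; exact absurd hy (not_lt.2 h1')),
              if_neg (by rintro ⟨h1', -⟩; exact absurd h (not_lt.2 h1'))]
          · exact absurd h hxa
          · rcases lt_trichotomy x b with h2 | h2 | h2
            · filter_upwards [(isOpen_Ioo (a := a) (b := b)).eventually_mem ⟨h, h2⟩] with y hy
              rw [ind_apply, ind_apply, if_pos ⟨hy.1.le, hy.2⟩, if_pos ⟨h.le, h2⟩]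
            · exact absurd h2 hxb
            · filter_upwards [(isOpen_Ioi (a := b)).eventually_mem h2] with y hy
              rw [ind_apply, ind_apply,
                if_neg (by rintro ⟨-, h2'⟩; exact absurd (hy.trans h2') (lt_irrefl b)),
                if_neg (by rintro ⟨-, h2'⟩; exact absurd (h2.trans h2') (lt_irrefl b))]
        filter_upwards [hp', hi] with y h h'
        simp only [h, h']
      · -- jumps at most 1
        intro x
        rw [hqL x]
        simp only [ind_apply]
        split_ifs with hi he he
        · -- interior
          have h1x : 1 ≤ p x := h1 x hi
          have hL1x : 1 ≤ L x := hL1 x he.1 he.2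
          have := hjump x
          rw [abs_le] at this ⊢
          omega
        · -- x = a
          have hxa : x = a := by
            rcases not_and_or.1 he with h' | h'
            · exact le_antisymm (not_lt.1 h') hi.1
            · exact absurd hi.2.le h'
          subst hxa
          have h1x : 1 ≤ p x := h1 x hi
          rw [abs_le]
          rcases le_or_gt x 0 with hx0 | hx0
          · have := hA hx0
            omega
          · have := hA' hx0
            omega
        · -- x = b
          have hxb : x = b := by
            rcases not_and_or.1 hi with h' | h'
            · exact absurd he.1.le h'
            · exact le_antisymm he.2 (not_lt.1 h')
          subst hxb
          have hL1x : 1 ≤ L x := hL1 x he.1 he.2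
          rw [abs_le]
          rcases le_or_gt x 0 with hx0 | hx0
          · have := hB' hx0
            omega
          · have := hB hx0
            omega
        · -- elsewhere
          have := hjump x
          simpa using this
    rcases hcase with ⟨ha0, hca, hcb⟩ | ⟨ha0, hb0, hca, hcb⟩ | ⟨hb0, hca, hcb⟩
    · exact main (fun h => absurd h (not_le.2 ha0)) (fun _ => (hcont a).1 hca)
        (fun hb => (hdisc_pos b hb).1 hcb) (fun h => absurd h (not_le.2 (ha0.trans hab)))
    · exact main (fun _ => (hdisc_le a ha0).1 hca) (fun h => absurd ha0 (not_le.2 h))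
        (fun _ => (hdisc_pos b hb0).1 hcb) (fun h => absurd hb0 (not_lt.2 h))
    · exact main (fun _ => (hdisc_le a (hab.le.trans hb0)).1 hca)
        (fun h => absurd (hab.le.trans hb0) (not_le.2 h))
        (fun h => absurd hb0 (not_le.2 h)) (fun _ => (hcont b).1 hcb)
end
end

section
/- For every real interval J, the operators on the Fock space 𝓕 satisfy the Drinfeld–Jimbo commutation relation (v − v⁻¹)·(E_J ∘ F_J − F_J ∘ E_J) = K_J − K_J⁻¹ as K-linear endomorphisms of 𝓕. -/
noncomputable section
open Function
open scoped Classical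

/-- The base field `K = ℚ(t)`. -/
abbrev K : Type := RatFunc ℚ

/-- The variable `t ∈ K` (playing the role of `υ^{1/2}`). -/
def tK : K := RatFunc.X

/-- The quantum parameter `v := t²`. -/
def vK : K := tK ^ 2

/-- The type of real pyramids. -/
def Pyr : Type := {p : ℝ → ℕ // IsRealPyramid p}

/-- The Fock space: the `K`-vector space with basis `|p⟩` indexed by real pyramids. -/
abbrev Fock : Type := Pyr →₀ K

/-- `E_J |p⟩ = −t·(−v)^{p(b)−p(a)} |p − 1_J⟩` if `J = [a,b)` is removable for `p`,
and `0` otherwise. -/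
def Evec (a b : ℝ) (p : Pyr) : Fock :=
  if h : Removable p.1 a b then
    Finsupp.single ⟨fun x => p.1 x - ind a b x, h.2⟩
      (-tK * (-vK) ^ ((p.1 b : ℤ) - (p.1 a : ℤ)))
  else 0

/-- `F_J |p⟩ = t·(−v)^{p(a)−p(b)} |p + 1_J⟩` if `J = [a,b)` is addable for `p`,
and `0` otherwise. -/
def Fvec (a b : ℝ) (p : Pyr) : Fock :=
  if h : Addable p.1 a b then
    Finsupp.single ⟨fun x => p.1 x + ind a b x, h⟩
      (tK * (-vK) ^ ((p.1 a : ℤ) - (p.1 b : ℤ)))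
  else 0

/-- The `K`-linear operator `E_J` on the Fock space. -/
def Eop (a b : ℝ) : Fock →ₗ[K] Fock :=
  Finsupp.lsum K fun p => LinearMap.toSpanSingleton K Fock (Evec a b p)

/-- The `K`-linear operator `F_J` on the Fock space. -/
def Fop (a b : ℝ) : Fock →ₗ[K] Fock :=
  Finsupp.lsum K fun p => LinearMap.toSpanSingleton K Fock (Fvec a b p)

/-- The `K`-linear operator `K_J` on the Fock space: `K_J |p⟩ = v^{n_J(p)} |p⟩`. -/
def Kop (a b : ℝ) : Fock →ₗ[K] Fock :=
  Finsupp.lsum K fun p =>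
    LinearMap.toSpanSingleton K Fock (Finsupp.single p (vK ^ (nJ p.1 a b)))

/-- The `K`-linear operator `K_J⁻¹` on the Fock space: `K_J⁻¹ |p⟩ = v^{−n_J(p)} |p⟩`. -/
def Kinvop (a b : ℝ) : Fock →ₗ[K] Fock :=
  Finsupp.lsum K fun p =>
    LinearMap.toSpanSingleton K Fock (Finsupp.single p (vK ^ (-nJ p.1 a b)))

/-! ### Auxiliary lemmas -/

lemma ind_of_mem {a b x : ℝ} (h : x ∈ Set.Ico a b) : ind a b x = 1 :=
  Set.indicator_of_mem h _

lemma ind_of_not_mem {a b x : ℝ} (h : x ∉ Set.Ico a b) : ind a b x = 0 :=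
  Set.indicator_of_notMem h _

lemma ind_of_lt {a b x : ℝ} (h : x < a) : ind a b x = 0 :=
  ind_of_not_mem fun hx => absurd hx.1 (not_le.2 h)

lemma ind_self {a b : ℝ} (hab : a < b) : ind a b a = 1 := ind_of_mem ⟨le_refl a, hab⟩

lemma ind_right {a b : ℝ} : ind a b b = 0 := ind_of_not_mem fun hx => lt_irrefl b hx.2

/-- A function with finitely many discontinuities is constant on some interval `(a-ε, a)`. -/
lemma exists_left_const {p : ℝ → ℕ} (hp : {x : ℝ | ¬ ContinuousAt p x}.Finite) (a : ℝ) :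
    ∃ ε > 0, ∀ x ∈ Set.Ioo (a - ε) a, ∀ y ∈ Set.Ioo (a - ε) a, p x = p y := by
  obtain ⟨ε, hε, hc⟩ : ∃ ε > 0, ∀ x ∈ Set.Ioo (a - ε) a, ContinuousAt p x := by
    by_cases hS : ({x : ℝ | ¬ ContinuousAt p x} ∩ Set.Ioo (a - 1) a).Nonempty
    · have hfin : ({x : ℝ | ¬ ContinuousAt p x} ∩ Set.Ioo (a - 1) a).Finite :=
        hp.subset Set.inter_subset_left
      have hne : hfin.toFinset.Nonempty := by
        simpa [Set.Finite.toFinset] using hS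
      set m := hfin.toFinset.max' hne with hm
      have hmS : m ∈ {x : ℝ | ¬ ContinuousAt p x} ∩ Set.Ioo (a - 1) a := by
        have h := hfin.toFinset.max'_mem hne
        rwa [Set.Finite.mem_toFinset] at h
      refine ⟨a - m, by linarith [hmS.2.2], fun x hx => ?_⟩
      by_contra hcx
      have hmx : m < x := by have := hx.1; linarith
      have hxS : x ∈ hfin.toFinset := by
        simp only [Set.Finite.mem_toFinset, Set.mem_inter_iff, Set.mem_setOf_eq, Set.mem_Ioo]
        exact ⟨hcx, lt_trans hmS.2.1 hmx, hx.2⟩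
      linarith [hfin.toFinset.le_max' x hxS]
    · exact ⟨1, one_pos, fun x hx => by
        by_contra hcx
        exact hS ⟨x, hcx, hx⟩⟩
  refine ⟨ε, hε, fun x hx y hy => ?_⟩
  exact IsPreconnected.constant isPreconnected_Ioo
    (fun z hz => (hc z hz).continuousWithinAt) hx hy

lemma leftLim_eq_const {f : ℝ → ℕ} {a ε : ℝ} {k : ℕ} (hε : 0 < ε)
    (h : ∀ x ∈ Set.Ioo (a - ε) a, f x = k) : Function.leftLim f a = k := by
  apply leftLim_eq_of_tendsto
  apply Filter.Tendsto.congr' _ tendsto_const_nhds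
  filter_upwards [Ioo_mem_nhdsLT_of_mem
    (show a ∈ Set.Ioc (a - ε) a from ⟨by linarith, le_refl a⟩)] with x hx
  exact (h x hx).symm

/-- An interval cannot be simultaneously addable and removable for a real pyramid. -/
lemma not_addable_and_removable {p : ℝ → ℕ} (hp : IsRealPyramid p) {a b : ℝ} (hab : a < b)
    (hA : Addable p a b) (hR : Removable p a b) : False := by
  obtain ⟨ε, hε, hconst⟩ := exists_left_const hp.2.2.2.2.2.1 a
  set k := p (a - ε / 2) with hkdef
  have hmem : a - ε / 2 ∈ Set.Ioo (a - ε) a := ⟨by linarith, by linarith⟩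
  have hk : ∀ x ∈ Set.Ioo (a - ε) a, p x = k := fun x hx => hconst x hx _ hmem
  have hpa1 : 1 ≤ p a := hR.1 a ⟨le_refl a, hab⟩
  have hLq : Function.leftLim (fun x => p x + ind a b x) a = k :=
    leftLim_eq_const hε (fun x hx => by simp [ind_of_lt hx.2, hk x hx])
  have hLr : Function.leftLim (fun x => p x - ind a b x) a = k :=
    leftLim_eq_const hε (fun x hx => by simp [ind_of_lt hx.2, hk x hx])
  have jq := hA.2.2.2.2.2.2 a
  have jr := hR.2.2.2.2.2.2.2 a
  rw [hLq] at jq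
  rw [hLr] at jr
  simp only [ind_self hab] at jq jr
  rw [abs_le] at jq jr
  have hpak : p a = k := by omega
  rcases le_or_gt a 0 with ha | ha
  · have hmono : p (a - ε / 2) - ind a b (a - ε / 2) ≤ p a - ind a b a :=
      hR.2.2.2.1 (show a - ε / 2 ≤ a by linarith) ha
    rw [ind_of_lt (show a - ε / 2 < a by linarith), ind_self hab] at hmono
    omega
  · set x₁ := max (a - ε / 2) (a / 2) with hx₁def
    have hx₁mem : x₁ ∈ Set.Ioo (a - ε) a :=
      ⟨lt_of_lt_of_le (by linarith) (le_max_left _ _), max_lt (by linarith) (by linarith)⟩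
    have hanti : p a + ind a b a ≤ p x₁ + ind a b x₁ :=
      hA.2.2.2.1 (le_max_of_le_right (by linarith)) (le_of_lt hx₁mem.2)
    rw [ind_self hab, ind_of_lt hx₁mem.2] at hanti
    have := hk x₁ hx₁mem
    omega

lemma removable_add {p : ℝ → ℕ} (hp : IsRealPyramid p) (a b : ℝ) :
    Removable (fun x => p x + ind a b x) a b := by
  constructor
  · intro x hx
    show 1 ≤ p x + ind a b x
    rw [ind_of_mem hx]; omega
  · show IsRealPyramid (fun x => (p x + ind a b x) - ind a b x)
    have he : (fun x => (p x + ind a b x) - ind a b x) = p :=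
      funext fun x => by omega
    rw [he]; exact hp

lemma addable_sub {p : ℝ → ℕ} (hp : IsRealPyramid p) {a b : ℝ}
    (h1 : ∀ x ∈ Set.Ico a b, 1 ≤ p x) :
    Addable (fun x => p x - ind a b x) a b := by
  show IsRealPyramid (fun x => (p x - ind a b x) + ind a b x)
  have he : (fun x => (p x - ind a b x) + ind a b x) = p := funext fun x => by
    by_cases hx : x ∈ Set.Ico a b
    · rw [ind_of_mem hx]; have := h1 x hx; omega
    · rw [ind_of_not_mem hx]; omega
  rw [he]; exact hp

lemma Eop_single (a b : ℝ) (p : Pyr) (c : K) :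
    Eop a b (Finsupp.single p c) = c • Evec a b p := by
  rw [Eop, Finsupp.lsum_single, LinearMap.toSpanSingleton_apply]

lemma Fop_single (a b : ℝ) (p : Pyr) (c : K) :
    Fop a b (Finsupp.single p c) = c • Fvec a b p := by
  rw [Fop, Finsupp.lsum_single, LinearMap.toSpanSingleton_apply]

lemma Kop_single (a b : ℝ) (p : Pyr) (c : K) :
    Kop a b (Finsupp.single p c) = c • Finsupp.single p (vK ^ nJ p.1 a b) := by
  rw [Kop, Finsupp.lsum_single, LinearMap.toSpanSingleton_apply]

lemma Kinvop_single (a b : ℝ) (p : Pyr) (c : K) :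
    Kinvop a b (Finsupp.single p c) = c • Finsupp.single p (vK ^ (-nJ p.1 a b)) := by
  rw [Kinvop, Finsupp.lsum_single, LinearMap.toSpanSingleton_apply]

lemma vK_ne_zero : vK ≠ 0 := by
  rw [vK, tK]
  exact pow_ne_zero 2 RatFunc.X_ne_zero

lemma neg_vK_ne_zero : (-vK) ≠ 0 := neg_ne_zero.mpr vK_ne_zero

lemma coeff_mul (m n : ℤ) (h : m + n = -1) :
    tK * (-vK) ^ m * (-tK * (-vK) ^ n) = 1 := by
  have hv : (-vK) ≠ 0 := neg_vK_ne_zero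
  have he : tK * (-vK) ^ m * (-tK * (-vK) ^ n) = -vK * ((-vK) ^ m * (-vK) ^ n) := by
    rw [vK]; ring
  rw [he, ← zpow_add₀ hv, h, zpow_neg_one, mul_inv_cancel₀ hv]

lemma single_coeff (p : Pyr) (m n : ℤ) (h : m + n = -1) :
    (vK - vK⁻¹) • ((tK * (-vK) ^ m) • Finsupp.single p (-tK * (-vK) ^ n)) =
      Finsupp.single p (vK ^ (1 : ℤ)) - Finsupp.single p (vK ^ (-1 : ℤ)) := by
  rw [Finsupp.smul_single', Finsupp.smul_single', ← Finsupp.single_sub]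
  congr 1
  rw [coeff_mul m n h, mul_one, zpow_one, zpow_neg_one]

lemma single_coeff' (p : Pyr) (m n : ℤ) (h : m + n = -1) :
    (vK - vK⁻¹) • ((0 : Fock) - (-tK * (-vK) ^ m) • Finsupp.single p (tK * (-vK) ^ n)) =
      Finsupp.single p (vK ^ (-1 : ℤ)) - Finsupp.single p (vK ^ (1 : ℤ)) := by
  rw [zero_sub, Finsupp.smul_single', smul_neg, Finsupp.smul_single',
    ← Finsupp.single_neg, ← Finsupp.single_sub]
  congr 1
  have hc : -tK * (-vK) ^ m * (tK * (-vK) ^ n) = 1 := by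
    rw [show -tK * (-vK) ^ m * (tK * (-vK) ^ n)
        = tK * (-vK) ^ n * (-tK * (-vK) ^ m) by ring]
    exact coeff_mul n m (by omega)
  rw [hc, mul_one, zpow_one, zpow_neg_one]
  ring

/-- The key pointwise computation on a basis vector. -/
lemma fock_key (a b : ℝ) (hab : a < b) (p : Pyr) :
    (vK - vK⁻¹) • (Eop a b (Fvec a b p) - Fop a b (Evec a b p)) =
      Finsupp.single p (vK ^ nJ p.1 a b) - Finsupp.single p (vK ^ (-nJ p.1 a b)) := by
  by_cases hA : Addable p.1 a b
  · have hnR : ¬ Removable p.1 a b := fun hR => not_addable_and_removable p.2 hab hA hR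
    have hn : nJ p.1 a b = 1 := if_pos hA
    have hE0 : Evec a b p = 0 := dif_neg hnR
    set q : Pyr := ⟨fun x => p.1 x + ind a b x, hA⟩ with hq
    have hF : Fvec a b p
        = Finsupp.single q (tK * (-vK) ^ ((p.1 a : ℤ) - (p.1 b : ℤ))) := dif_pos hA
    have hRq : Removable q.1 a b := removable_add p.2 a b
    have hidx : (⟨fun x => q.1 x - ind a b x, hRq.2⟩ : Pyr) = p :=
      Subtype.ext (funext fun x => by
        show p.1 x + ind a b x - ind a b x = p.1 x
        omega)
    have hqa : q.1 a = p.1 a + 1 := by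
      show p.1 a + ind a b a = _; rw [ind_self hab]
    have hqb : q.1 b = p.1 b := by
      show p.1 b + ind a b b = _; rw [ind_right]; omega
    have hEq : Evec a b q
        = Finsupp.single p (-tK * (-vK) ^ (((p.1 b : ℤ)) - ((p.1 a : ℤ) + 1))) := by
      rw [Evec, dif_pos hRq, hidx, hqa, hqb]
      push_cast
      ring_nf
    rw [hE0, map_zero, sub_zero, hF, Eop_single, hEq, hn]
    exact single_coeff p _ _ (by omega)
  · by_cases hR : Removable p.1 a b
    · have hn : nJ p.1 a b = -1 := by rw [nJ, if_neg hA, if_pos hR]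
      have hF0 : Fvec a b p = 0 := dif_neg hA
      set r : Pyr := ⟨fun x => p.1 x - ind a b x, hR.2⟩ with hr
      have hE : Evec a b p
          = Finsupp.single r (-tK * (-vK) ^ ((p.1 b : ℤ) - (p.1 a : ℤ))) := dif_pos hR
      have hAr : Addable r.1 a b := addable_sub p.2 hR.1
      have hidx : (⟨fun x => r.1 x + ind a b x, hAr⟩ : Pyr) = p :=
        Subtype.ext (funext fun x => by
          show (p.1 x - ind a b x) + ind a b x = p.1 x
          by_cases hx : x ∈ Set.Ico a b
          · rw [ind_of_mem hx]; have := hR.1 x hx; omega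
          · rw [ind_of_not_mem hx]; omega)
      have hpa1 : 1 ≤ p.1 a := hR.1 a ⟨le_refl a, hab⟩
      have hra : r.1 a = p.1 a - 1 := by
        show p.1 a - ind a b a = _; rw [ind_self hab]
      have hrb : r.1 b = p.1 b := by
        show p.1 b - ind a b b = _; rw [ind_right]; omega
      have hFr : Fvec a b r
          = Finsupp.single p (tK * (-vK) ^ (((p.1 a : ℤ) - 1) - (p.1 b : ℤ))) := by
        rw [Fvec, dif_pos hAr, hidx, hra, hrb]
        rw [Nat.cast_sub hpa1]
        push_cast
        ring_nf
      rw [hF0, map_zero, hE, Fop_single, hFr, hn, neg_neg]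
      exact single_coeff' p _ _ (by omega)
    · have hn : nJ p.1 a b = 0 := by rw [nJ, if_neg hA, if_neg hR]
      have hF0 : Fvec a b p = 0 := dif_neg hA
      have hE0 : Evec a b p = 0 := dif_neg hR
      rw [hF0, hE0, map_zero, map_zero, sub_self, smul_zero, hn, neg_zero, sub_self]

/-- the Drinfeld–Jimbo relation
`(v − v⁻¹)·(E_J ∘ F_J − F_J ∘ E_J) = K_J − K_J⁻¹` holds on the Fock space. -/
theorem fock_EF_commutator (a b : ℝ) (hab : a < b) :
    (vK - vK⁻¹) • (Eop a b ∘ₗ Fop a b - Fop a b ∘ₗ Eop a b) = Kop a b - Kinvop a b := by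
  apply Finsupp.lhom_ext
  intro p c
  simp only [LinearMap.smul_apply, LinearMap.sub_apply, LinearMap.comp_apply,
    Fop_single, Eop_single, Kop_single, Kinvop_single, map_smul]
  rw [← smul_sub, smul_comm, fock_key a b hab p, smul_sub]
end
end
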